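/- For every natural number n and all convex subsets x, y_1, …, y_{n+2} of ℝ^{n+1} each containing the origin 0, one has ⋂_{i=1}^{n+2} convexHull(x ∪ y_i) ⊆ convexHull(x ∪ ⋃_{(I₁,I₂)} (convexHull(⋃_{i∈I₁} y_i) ∩ convexHull(⋃_{i∈I₂} y_i))), where the union ⋃_{(I₁,I₂)} is taken over all ordered pairs (I₁, I₂) of nonempty disjoint subsets of the index set {1, …, n+2} whose union is the whole index set. -/

import Mathlib

open Finset

private lemma radon_aux (n : ℕ) (x : Set (Fin (n + 1) → ℝ))
    (y : Fin (n + 2) → Set (Fin (n + 1) → ℝ))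
    (hx : Convex ℝ x)
    (hx0 : (0 : Fin (n + 1) → ℝ) ∈ x) (hy0 : ∀ i, (0 : Fin (n + 1) → ℝ) ∈ y i)
    (p : Fin (n + 1) → ℝ) (u v : Fin (n + 2) → (Fin (n + 1) → ℝ)) (t : Fin (n + 2) → ℝ)
    (hu : ∀ i, u i ∈ x) (hv : ∀ i, v i ∈ y i)
    (ht0 : ∀ i, 0 < t i) (ht1 : ∀ i, t i ≤ 1)
    (hpt : ∀ i, (1 - t i) • u i + t i • v i = p)
    (c : Fin (n + 2) → ℝ) (hcv : ∑ i, c i • v i = 0) (hcne : ∃ i, c i ≠ 0)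
    (hble : ∑ i ∈ Finset.univ.filter (fun i => c i < 0), -c i
        ≤ ∑ i ∈ Finset.univ.filter (fun i => 0 < c i), c i) :
    p ∈ convexHull ℝ (x ∪
        ⋃ (I : Set (Fin (n + 2)) × Set (Fin (n + 2)))
          (_ : I.1.Nonempty ∧ I.2.Nonempty ∧ Disjoint I.1 I.2 ∧ I.1 ∪ I.2 = Set.univ),
          (convexHull ℝ (⋃ i ∈ I.1, y i) ∩ convexHull ℝ (⋃ i ∈ I.2, y i))) := by
  classical
  set S1 : Finset (Fin (n + 2)) := Finset.univ.filter (fun i => 0 < c i) with hS1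
  set S2 : Finset (Fin (n + 2)) := Finset.univ.filter (fun i => c i < 0) with hS2
  set A : ℝ := ∑ i ∈ S1, c i with hA
  set B : ℝ := ∑ i ∈ S2, -c i with hB
  have hApos : 0 < A := by
    obtain ⟨i, hci⟩ := hcne
    rcases hci.lt_or_gt with h | h
    · have h1 : -c i ≤ B := by
        refine Finset.single_le_sum (f := fun j => -c j) ?_ ?_
        · intro j hj
          have := (Finset.mem_filter.mp hj).2
          show 0 ≤ -c j
          linarith
        · simp [hS2, h]
      linarith
    · have h1 : c i ≤ A := by
        refine Finset.single_le_sum (f := c) ?_ ?_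
        · intro j hj
          exact le_of_lt (Finset.mem_filter.mp hj).2
        · simp [hS1, h]
      linarith
  have hS1ne : S1.Nonempty := by
    by_contra h
    rw [Finset.not_nonempty_iff_eq_empty] at h
    rw [hA, h, Finset.sum_empty] at hApos
    exact lt_irrefl 0 hApos
  set z : Fin (n + 1) → ℝ := A⁻¹ • ∑ i ∈ S1, c i • v i with hz
  have hdisj : Disjoint S1 S2 := by
    rw [Finset.disjoint_left]
    intro i h1 h2
    have p1 := (Finset.mem_filter.mp h1).2
    have p2 := (Finset.mem_filter.mp h2).2
    linarith
  have claim0 : ∑ i ∈ S1, c i • v i = ∑ i ∈ S2, (-c i) • v i := by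
    have hsplit : ∑ i ∈ S1 ∪ S2, c i • v i = ∑ i, c i • v i := by
      apply Finset.sum_subset (Finset.subset_univ _)
      intro i _ hi
      have h1 : ¬ (0 < c i) := fun h => hi (Finset.mem_union_left _ (by simp [hS1, h]))
      have h2 : ¬ (c i < 0) := fun h => hi (Finset.mem_union_right _ (by simp [hS2, h]))
      have : c i = 0 := le_antisymm (not_lt.mp h1) (not_lt.mp h2)
      simp [this]
    rw [Finset.sum_union hdisj, hcv] at hsplit
    have := eq_neg_of_add_eq_zero_left hsplit
    rw [this, ← Finset.sum_neg_distrib]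
    exact Finset.sum_congr rfl (fun i _ => (neg_smul _ _).symm)
  -- key identity
  have hkey : ∀ i, (c i / t i) • p = (c i / t i - c i) • u i + c i • v i := by
    intro i
    have htne := (ht0 i).ne'
    rw [← hpt i, smul_add, smul_smul, smul_smul]
    congr 2
    · field_simp
    · field_simp
  set w : Fin (n + 2) → ℝ := fun i => c i / t i - c i with hw
  have hwnn : ∀ i ∈ S1, 0 ≤ w i := by
    intro i hi
    have hci := (Finset.mem_filter.mp hi).2
    have h1 : c i ≤ c i / t i := by
      rw [le_div_iff₀ (ht0 i)]
      nlinarith [ht1 i, (ht0 i).le]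
    simp only [hw]
    linarith
  set E : ℝ := ∑ i ∈ S1, w i with hE
  set D : ℝ := ∑ i ∈ S1, c i / t i with hD
  have hEnn : 0 ≤ E := Finset.sum_nonneg hwnn
  have hDE : D = E + A := by
    rw [hD, hE, hA, ← Finset.sum_add_distrib]
    exact Finset.sum_congr rfl (fun i _ => by simp only [hw]; ring)
  have hDpos : 0 < D := by rw [hDE]; linarith
  have hsum : D • p = (∑ i ∈ S1, w i • u i) + A • z := by
    have h1 : ∑ i ∈ S1, (c i / t i) • p = ∑ i ∈ S1, ((w i) • u i + c i • v i) :=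
      Finset.sum_congr rfl (fun i _ => hkey i)
    rw [Finset.sum_add_distrib, ← Finset.sum_smul] at h1
    rw [hz, smul_inv_smul₀ hApos.ne']
    exact h1
  -- the x-part point
  have hU : ∃ u0 ∈ x, (∑ i ∈ S1, w i • u i) = E • u0 := by
    rcases eq_or_lt_of_le hEnn with hE0 | hEpos
    · refine ⟨0, hx0, ?_⟩
      have hall : ∀ i ∈ S1, w i = 0 :=
        (Finset.sum_eq_zero_iff_of_nonneg hwnn).mp hE0.symm
      rw [Finset.sum_eq_zero (fun i hi => by rw [hall i hi, zero_smul]), smul_zero]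
    · refine ⟨S1.centerMass w u, ?_, ?_⟩
      · have hmem := Finset.centerMass_mem_convexHull S1 hwnn (lt_of_lt_of_eq hEpos hE)
          (fun i _ => hu i)
        rwa [hx.convexHull_eq] at hmem
      · rw [Finset.centerMass, ← hE, smul_inv_smul₀ hEpos.ne']
  obtain ⟨u0, hu0x, hU0⟩ := hU
  have hpfinal : p = (E / D) • u0 + (A / D) • z := by
    have h2 := congrArg (fun q => D⁻¹ • q) hsum
    simp only [smul_add] at h2
    rw [inv_smul_smul₀ hDpos.ne'] at h2
    rw [h2, hU0, smul_smul, smul_smul, div_eq_inv_mul, div_eq_inv_mul]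
  have hcoef : E / D + A / D = 1 := by
    rw [← add_div, ← hDE, div_self hDpos.ne']
  by_cases hI2 : ({i : Fin (n + 2) | c i ≤ 0}).Nonempty
  · -- main case: partition exists
    set I1 : Set (Fin (n + 2)) := {i | 0 < c i} with hI1def
    set I2 : Set (Fin (n + 2)) := {i | c i ≤ 0} with hI2def
    have hz1 : z ∈ convexHull ℝ (⋃ i ∈ I1, y i) := by
      have hmem := Finset.centerMass_mem_convexHull S1
        (fun i hi => (le_of_lt (Finset.mem_filter.mp hi).2)) (lt_of_lt_of_eq hApos hA)
        (z := v) (s := ⋃ i ∈ I1, y i)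
        (fun i hi => Set.mem_biUnion ((Finset.mem_filter.mp hi).2) (hv i))
      rwa [Finset.centerMass, ← hA] at hmem
    have h0mem : (0 : Fin (n + 1) → ℝ) ∈ convexHull ℝ (⋃ i ∈ I2, y i) := by
      obtain ⟨j, hj⟩ := hI2
      exact subset_convexHull ℝ _ (Set.mem_biUnion hj (hy0 j))
    have hz2 : z ∈ convexHull ℝ (⋃ i ∈ I2, y i) := by
      by_cases hS2e : S2.Nonempty
      · have hBpos : 0 < B := by
          refine Finset.sum_pos ?_ hS2e
          intro i hi
          have := (Finset.mem_filter.mp hi).2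
          linarith
        have hz'mem : S2.centerMass (fun i => -c i) v ∈ convexHull ℝ (⋃ i ∈ I2, y i) := by
          refine Finset.centerMass_mem_convexHull S2 ?_ (lt_of_lt_of_eq hBpos hB) ?_
          · intro i hi
            have := (Finset.mem_filter.mp hi).2
            linarith
          · intro i hi
            exact Set.mem_biUnion (le_of_lt (Finset.mem_filter.mp hi).2) (hv i)
        have hzeq : z = (B / A) • S2.centerMass (fun i => -c i) v := by
          rw [hz, claim0, Finset.centerMass, ← hB, smul_smul]
          congr 1
          have hBne : B ≠ 0 := hBpos.ne'
          have hAne : A ≠ 0 := hApos.ne'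
          field_simp
        rw [hzeq]
        refine (convex_convexHull ℝ _).smul_mem_of_zero_mem h0mem hz'mem ⟨?_, ?_⟩
        · positivity
        · rw [div_le_one hApos]
          exact hble
      · rw [Finset.not_nonempty_iff_eq_empty] at hS2e
        have : z = 0 := by rw [hz, claim0, hS2e, Finset.sum_empty, smul_zero]
        rw [this]
        exact h0mem
    have hzZ : z ∈ ⋃ (I : Set (Fin (n + 2)) × Set (Fin (n + 2)))
          (_ : I.1.Nonempty ∧ I.2.Nonempty ∧ Disjoint I.1 I.2 ∧ I.1 ∪ I.2 = Set.univ),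
          (convexHull ℝ (⋃ i ∈ I.1, y i) ∩ convexHull ℝ (⋃ i ∈ I.2, y i)) := by
      apply Set.mem_iUnion.mpr
      refine ⟨(I1, I2), Set.mem_iUnion.mpr ⟨⟨?_, hI2, ?_, ?_⟩, hz1, hz2⟩⟩
      · obtain ⟨i, hi⟩ := hS1ne
        exact ⟨i, (Finset.mem_filter.mp hi).2⟩
      · rw [Set.disjoint_left]
        intro i h1
        simp only [hI1def, Set.mem_setOf_eq] at h1
        simp only [hI2def, Set.mem_setOf_eq]
        exact not_le.mpr h1
      · apply Set.eq_univ_iff_forall.mpr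
        intro i
        rcases lt_or_ge 0 (c i) with h | h
        · exact Set.mem_union_left _ (by simp only [hI1def, Set.mem_setOf_eq]; exact h)
        · exact Set.mem_union_right _ (by simp only [hI2def, Set.mem_setOf_eq]; exact h)
    have hmem1 : u0 ∈ convexHull ℝ (x ∪ ⋃ (I : Set (Fin (n + 2)) × Set (Fin (n + 2)))
          (_ : I.1.Nonempty ∧ I.2.Nonempty ∧ Disjoint I.1 I.2 ∧ I.1 ∪ I.2 = Set.univ),
          (convexHull ℝ (⋃ i ∈ I.1, y i) ∩ convexHull ℝ (⋃ i ∈ I.2, y i))) :=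
      subset_convexHull ℝ _ (Set.mem_union_left _ hu0x)
    have hmem2 : z ∈ convexHull ℝ (x ∪ ⋃ (I : Set (Fin (n + 2)) × Set (Fin (n + 2)))
          (_ : I.1.Nonempty ∧ I.2.Nonempty ∧ Disjoint I.1 I.2 ∧ I.1 ∪ I.2 = Set.univ),
          (convexHull ℝ (⋃ i ∈ I.1, y i) ∩ convexHull ℝ (⋃ i ∈ I.2, y i))) :=
      subset_convexHull ℝ _ (Set.mem_union_right _ hzZ)
    rw [hpfinal]
    exact (convex_convexHull ℝ _) hmem1 hmem2
      (div_nonneg hEnn hDpos.le) (div_nonneg hApos.le hDpos.le) hcoef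
  · -- all coefficients positive: p ∈ x
    have hall : ∀ i, 0 < c i := by
      intro i
      by_contra h
      exact hI2 ⟨i, not_lt.mp h⟩
    have hS1univ : S1 = Finset.univ := by
      ext i
      simp [hS1, hall i]
    have hz0 : z = 0 := by
      rw [hz, hS1univ, hcv, smul_zero]
    have hpx : p ∈ x := by
      have : p = (E / D) • u0 := by
        rw [hpfinal, hz0, smul_zero, add_zero]
      rw [this]
      refine hx.smul_mem_of_zero_mem hx0 hu0x ⟨div_nonneg hEnn hDpos.le, ?_⟩
      rw [div_le_one hDpos, hDE]
      linarith
    exact subset_convexHull ℝ _ (Set.mem_union_left _ hpx)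

/-- Radon-type identity (x.47) in `Conv(ℝ^{n+1})_{≥{0}}`: for all convex subsets
`x, y₁, …, y_{n+2}` of `ℝ^{n+1}` each containing the origin, the inclusion holds. -/
theorem conv_ge_zero_radon_identity (n : ℕ) (x : Set (Fin (n + 1) → ℝ))
    (y : Fin (n + 2) → Set (Fin (n + 1) → ℝ))
    (hx : Convex ℝ x) (hy : ∀ i, Convex ℝ (y i))
    (hx0 : (0 : Fin (n + 1) → ℝ) ∈ x) (hy0 : ∀ i, (0 : Fin (n + 1) → ℝ) ∈ y i) :
    (⋂ i, convexHull ℝ (x ∪ y i)) ⊆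
      convexHull ℝ (x ∪
        ⋃ (I : Set (Fin (n + 2)) × Set (Fin (n + 2)))
          (_ : I.1.Nonempty ∧ I.2.Nonempty ∧ Disjoint I.1 I.2 ∧ I.1 ∪ I.2 = Set.univ),
          (convexHull ℝ (⋃ i ∈ I.1, y i) ∩ convexHull ℝ (⋃ i ∈ I.2, y i))) := by
  classical
  intro p hp
  rw [Set.mem_iInter] at hp
  have key : ∀ i, ∃ (u' v' : Fin (n + 1) → ℝ) (a b : ℝ), u' ∈ x ∧ v' ∈ y i ∧ 0 ≤ a ∧ 0 ≤ b ∧ a + b = 1 ∧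
      a • u' + b • v' = p := by
    intro i
    have h1 := hp i
    rw [convexHull_union ⟨0, hx0⟩ ⟨0, hy0 i⟩, hx.convexHull_eq, (hy i).convexHull_eq,
      mem_convexJoin] at h1
    obtain ⟨u', hu', v', hv', a, b, ha, hb, hab, habp⟩ := h1
    exact ⟨u', v', a, b, hu', hv', ha, hb, hab, habp⟩
  choose u v a t hu hv ha ht hat hp' using key
  by_cases h0 : ∃ i, t i = 0
  · obtain ⟨i, hi⟩ := h0
    have hai : a i = 1 := by linarith [hat i]
    have : p = u i := by
      rw [← hp' i, hi, hai, one_smul, zero_smul, add_zero]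
    rw [this]
    exact subset_convexHull ℝ _ (Set.mem_union_left _ (hu i))
  · push_neg at h0
    have ht0 : ∀ i, 0 < t i := fun i => lt_of_le_of_ne (ht i) (Ne.symm (h0 i))
    have ht1 : ∀ i, t i ≤ 1 := fun i => by linarith [hat i, ha i]
    have hpt : ∀ i, (1 - t i) • u i + t i • v i = p := by
      intro i
      have hai : a i = 1 - t i := by linarith [hat i]
      rw [← hai]
      exact hp' i
    -- linear dependence of the n+2 vectors v i in ℝ^{n+1}
    have hdep : ¬ LinearIndependent ℝ v := by
      intro hind
      have h1 := hind.fintype_card_le_finrank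
      rw [Module.finrank_fin_fun, Fintype.card_fin] at h1
      omega
    obtain ⟨c, hcv, i0, hci0⟩ := Fintype.not_linearIndependent_iff.mp hdep
    rcases le_total (∑ i ∈ Finset.univ.filter (fun i => c i < 0), -c i)
        (∑ i ∈ Finset.univ.filter (fun i => 0 < c i), c i) with hble | hble
    · exact radon_aux n x y hx hx0 hy0 p u v t hu hv ht0 ht1 hpt c hcv ⟨i0, hci0⟩ hble
    · refine radon_aux n x y hx hx0 hy0 p u v t hu hv ht0 ht1 hpt (fun i => -c i) ?_
        ⟨i0, by simpa using hci0⟩ ?_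
      · simp only [neg_smul]
        rw [Finset.sum_neg_distrib, hcv, neg_zero]
      · have e1 : Finset.univ.filter (fun i => -c i < 0) = Finset.univ.filter (fun i => 0 < c i) := by
          ext i; simp [neg_lt_zero]
        have e2 : Finset.univ.filter (fun i => 0 < -c i) = Finset.univ.filter (fun i => c i < 0) := by
          ext i; simp [neg_pos]
        rw [e1, e2]
        simp only [neg_neg]
        exact hble
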